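/- Convergence of the collocation minimizers (abstract version): Let U ⊂ H ⊂ C(Ω̄) with U compactly embedded in H and H continuously embedded in C(Ω̄) for a compact Ω̄ ⊂ R^d, and suppose the PDE operator P : H → C(Ω) and boundary operator B : H → C(∂Ω) are continuous maps. Suppose the PDE P(u) = f on Ω, B(u) = g on ∂Ω has a unique solution u* ∈ U. Let (u†_M) ⊂ U satisfy ‖u†_M‖_U ≤ ‖u*‖_U, P(u†_M)(x_m) = f(x_m) at interior collocation points and B(u†_M)(x_m) = g(x_m) at boundary collocation points, where the fill distances of the interior points in Ω and the boundary points in ∂Ω tend to 0 as M → ∞. Then u†_M → u* in H (and pointwise on Ω). -/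

import Mathlib

open Filter

/-- Auxiliary lemma: if a continuous operator `Q` applied to a convergent sequence `v k → h`
agrees with `Q w` on collocation point sets `X k` which become dense in `S` (contained in a
compact set `K`), then `Q h = Q w` on `S`. -/
lemma collocation_limit_eq {H : Type*} [NormedAddCommGroup H] [NormedSpace ℝ H]
    {E : Type*} [MetricSpace E]
    {S K : Set E} (hK : IsCompact K) (hSK : S ⊆ K)
    {Q : H → C(E, ℝ)} (hQ : Continuous Q)
    {w h : H} {v : ℕ → H} (hv : Tendsto v atTop (nhds h))
    {X : ℕ → Finset E} (hX : ∀ k, (X k : Set E) ⊆ S)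
    (hfill : ∀ ε > 0, ∀ᶠ k in atTop, ∀ x ∈ S, ∃ x' ∈ X k, dist x x' < ε)
    (hcol : ∀ k, ∀ x ∈ X k, Q (v k) x = Q w x) :
    ∀ x ∈ S, Q h x = Q w x := by
  intro x hx
  have hunif : TendstoUniformlyOn (fun k y => Q (v k) y) (Q h) atTop K :=
    ContinuousMap.tendsto_iff_forall_isCompact_tendstoUniformlyOn.mp
      ((hQ.tendsto h).comp hv) K hK
  apply eq_of_forall_dist_le
  intro ε hε
  have hε3 : (0:ℝ) < ε / 3 := by linarith
  -- continuity of Q h and Q w at x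
  obtain ⟨δ₁, hδ₁, hδ₁'⟩ :=
    Metric.continuousAt_iff.mp ((Q h).continuous.continuousAt (x := x)) _ hε3
  obtain ⟨δ₂, hδ₂, hδ₂'⟩ :=
    Metric.continuousAt_iff.mp ((Q w).continuous.continuousAt (x := x)) _ hε3
  set δ := min δ₁ δ₂ with hδdef
  have hδ : 0 < δ := lt_min hδ₁ hδ₂
  have hev₁ := hfill δ hδ
  have hev₂ := Metric.tendstoUniformlyOn_iff.mp hunif (ε / 3) hε3
  obtain ⟨k, hk₁, hk₂⟩ := (hev₁.and hev₂).exists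
  obtain ⟨x', hx'X, hxx'⟩ := hk₁ x hx
  have hx'S : x' ∈ S := hX k hx'X
  have d1 : dist (Q h x) (Q h x') < ε / 3 := by
    rw [dist_comm]
    exact hδ₁' (lt_of_lt_of_le (by rwa [dist_comm] at hxx') (min_le_left _ _))
  have d2 : dist (Q h x') (Q (v k) x') < ε / 3 := hk₂ x' (hSK hx'S)
  have d3 : dist (Q w x') (Q w x) < ε / 3 :=
    hδ₂' (lt_of_lt_of_le (by rwa [dist_comm] at hxx') (min_le_right _ _))
  have hcolk : Q (v k) x' = Q w x' := hcol k x' hx'X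
  calc dist (Q h x) (Q w x)
      ≤ dist (Q h x) (Q h x') + dist (Q h x') (Q w x) := dist_triangle _ _ _
    _ ≤ dist (Q h x) (Q h x') + (dist (Q h x') (Q w x') + dist (Q w x') (Q w x)) := by
        gcongr; exact dist_triangle _ _ _
    _ = dist (Q h x) (Q h x') + (dist (Q h x') (Q (v k) x') + dist (Q w x') (Q w x)) := by
        rw [hcolk]
    _ ≤ ε := by linarith

/-- Convergence of the collocation minimizers, abstract version (Theorem 3.3):
with `U` compactly embedded in `H`, `H` continuously embedded in continuous functions,
continuous PDE operators `P, B`, a unique solution `u*`, norm-bounded collocation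
minimizers `u†_M` satisfying the PDE at interior/boundary collocation points whose
fill distances tend to `0`, one has `u†_M → u*` in `H` and pointwise on `Ω`. -/
theorem stmt_16 {U H : Type*} [NormedAddCommGroup U] [NormedSpace ℝ U]
    [NormedAddCommGroup H] [NormedSpace ℝ H]
    (d : ℕ) (Ω : Set (EuclideanSpace ℝ (Fin d)))
    (hΩcl : IsCompact (closure Ω))
    (ι : U →L[ℝ] H) (hιinj : Function.Injective ι) (hιcpt : IsCompactOperator ι)
    (ιC : H →L[ℝ] C(EuclideanSpace ℝ (Fin d), ℝ)) (hιCinj : Function.Injective ιC)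
    (P B : H → C(EuclideanSpace ℝ (Fin d), ℝ)) (hP : Continuous P) (hB : Continuous B)
    (f g : EuclideanSpace ℝ (Fin d) → ℝ)
    (ustar : U)
    (hsolI : ∀ x ∈ Ω, P (ι ustar) x = f x)
    (hsolB : ∀ x ∈ frontier Ω, B (ι ustar) x = g x)
    (huniq : ∀ h : H, (∀ x ∈ Ω, P h x = f x) → (∀ x ∈ frontier Ω, B h x = g x) →
      h = ι ustar)
    (XI XB : ℕ → Finset (EuclideanSpace ℝ (Fin d)))
    (hXI : ∀ M, (XI M : Set (EuclideanSpace ℝ (Fin d))) ⊆ Ω)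
    (hXB : ∀ M, (XB M : Set (EuclideanSpace ℝ (Fin d))) ⊆ frontier Ω)
    (hfillI : ∀ ε > 0, ∃ M₀, ∀ M ≥ M₀, ∀ x ∈ Ω, ∃ x' ∈ XI M, dist x x' < ε)
    (hfillB : ∀ ε > 0, ∃ M₀, ∀ M ≥ M₀, ∀ x ∈ frontier Ω, ∃ x' ∈ XB M, dist x x' < ε)
    (udag : ℕ → U)
    (hbound : ∀ M, ‖udag M‖ ≤ ‖ustar‖)
    (hcolI : ∀ M, ∀ x ∈ XI M, P (ι (udag M)) x = f x)
    (hcolB : ∀ M, ∀ x ∈ XB M, B (ι (udag M)) x = g x) :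
    Tendsto (fun M => ι (udag M)) atTop (nhds (ι ustar)) ∧
    ∀ x ∈ Ω, Tendsto (fun M => ιC (ι (udag M)) x) atTop (nhds (ιC (ι ustar) x)) := by
  have hΩsub : Ω ⊆ closure Ω := subset_closure
  have hfrsub : frontier Ω ⊆ closure Ω := frontier_subset_closure
  -- all ι (udag M) lie in a compact set
  have hKcpt : IsCompact (closure (⇑ι '' Metric.closedBall 0 ‖ustar‖)) :=
    hιcpt.isCompact_closure_image_closedBall (σ₁₂ := RingHom.id ℝ)
      (f := (ι : U →ₗ[ℝ] H)) ‖ustar‖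
  have hmem : ∀ M, ι (udag M) ∈ closure (⇑ι '' Metric.closedBall 0 ‖ustar‖) := fun M =>
    subset_closure ⟨udag M, by simpa [Metric.mem_closedBall] using hbound M, rfl⟩
  have hconv : Tendsto (fun M => ι (udag M)) atTop (nhds (ι ustar)) := by
    apply tendsto_of_subseq_tendsto
    intro ns hns
    obtain ⟨h, -, φ, hφmono, hφ⟩ := hKcpt.tendsto_subseq (x := fun n => ι (udag (ns n)))
      (fun n => hmem (ns n))
    have hσ : Tendsto (ns ∘ φ) atTop atTop := hns.comp hφmono.tendsto_atTop
    have hφ' : Tendsto (fun k => ι (udag ((ns ∘ φ) k))) atTop (nhds h) := hφ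
    -- the limit satisfies the PDE in the interior
    have hintfill : ∀ ε > 0, ∀ᶠ k in atTop, ∀ x ∈ Ω, ∃ x' ∈ XI ((ns ∘ φ) k), dist x x' < ε := by
      intro ε hε
      obtain ⟨M₀, hM₀⟩ := hfillI ε hε
      filter_upwards [hσ.eventually_ge_atTop M₀] with k hk
      exact hM₀ _ hk
    have hbdfill : ∀ ε > 0, ∀ᶠ k in atTop,
        ∀ x ∈ frontier Ω, ∃ x' ∈ XB ((ns ∘ φ) k), dist x x' < ε := by
      intro ε hε
      obtain ⟨M₀, hM₀⟩ := hfillB ε hε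
      filter_upwards [hσ.eventually_ge_atTop M₀] with k hk
      exact hM₀ _ hk
    have hPh : ∀ x ∈ Ω, P h x = P (ι ustar) x :=
      collocation_limit_eq hΩcl hΩsub hP hφ' (fun k => hXI ((ns ∘ φ) k)) hintfill
        (fun k x hxX => by
          rw [hcolI _ x hxX, hsolI x (hXI _ hxX)])
    have hBh : ∀ x ∈ frontier Ω, B h x = B (ι ustar) x :=
      collocation_limit_eq hΩcl hfrsub hB hφ' (fun k => hXB ((ns ∘ φ) k)) hbdfill
        (fun k x hxX => by
          rw [hcolB _ x hxX, hsolB x (hXB _ hxX)])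
    have hhs : h = ι ustar :=
      huniq h (fun x hx => (hPh x hx).trans (hsolI x hx))
        (fun x hx => (hBh x hx).trans (hsolB x hx))
    exact ⟨φ, hhs ▸ hφ⟩
  refine ⟨hconv, fun x _ => ?_⟩
  exact ((continuous_eval_const x).tendsto _).comp
    ((ιC.continuous.tendsto _).comp hconv)
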